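/- Let m ≥ 1 and let λ ∈ ℝ^m satisfy λ_1 ≥ ⋯ ≥ λ_m > 0. Then for every w ∈ ℝ^m, sup{ Σ_{i=1}^m u_i w_i : u ∈ ℝ^m, J_λ(u) ≤ 1 } = max_{1 ≤ k ≤ m} ( Σ_{i=1}^k |w|_(i) ) / ( Σ_{i=1}^k λ_i ), where |w|_(1) ≥ ⋯ ≥ |w|_(m) are the absolute values of the entries of w sorted in decreasing order; that is, the dual norm of the sorted-ℓ1 norm is the maximum over k of the sum of the k largest absolute entries divided by the sum of the k largest weights. -/

import Mathlib

open Finset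

private lemma sign_mul_self_abs (x : ℝ) : Real.sign x * x = |x| := by
  rcases lt_trichotomy x 0 with h | h | h
  · rw [Real.sign_of_neg h, abs_of_neg h]; ring
  · simp [h]
  · rw [Real.sign_of_pos h, abs_of_pos h]; ring

private lemma abs_sign_le_one (x : ℝ) : |Real.sign x| ≤ 1 := by
  rcases Real.sign_apply_eq x with h | h | h <;> simp [h]

/-- Abel summation inequality. -/
private lemma abel_le (n : ℕ) (a b l : ℕ → ℝ) (M : ℝ)
    (ha : ∀ i, a (i + 1) ≤ a i) (ha0 : 0 ≤ a (n - 1))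
    (hb : ∀ k, k < n → ∑ i ∈ range (k + 1), b i ≤ M * ∑ i ∈ range (k + 1), l i) :
    ∑ i ∈ range n, a i * b i ≤ M * ∑ i ∈ range n, a i * l i := by
  rcases Nat.eq_zero_or_pos n with hn | hn
  · simp [hn]
  have h1 := Finset.sum_range_by_parts a b n
  have h2 := Finset.sum_range_by_parts a l n
  simp only [smul_eq_mul] at h1 h2
  rw [h1, h2]
  have hn1 := hb (n - 1) (by omega)
  rw [show n - 1 + 1 = n from by omega] at hn1
  have hA : a (n - 1) * ∑ i ∈ range n, b i ≤ M * (a (n - 1) * ∑ i ∈ range n, l i) := by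
    calc a (n - 1) * ∑ i ∈ range n, b i
        ≤ a (n - 1) * (M * ∑ i ∈ range n, l i) := mul_le_mul_of_nonneg_left hn1 ha0
      _ = M * (a (n - 1) * ∑ i ∈ range n, l i) := by ring
  have hB : M * ∑ x ∈ range (n - 1), (a (x + 1) - a x) * ∑ i ∈ range (x + 1), l i
      ≤ ∑ x ∈ range (n - 1), (a (x + 1) - a x) * ∑ i ∈ range (x + 1), b i := by
    rw [Finset.mul_sum]
    apply Finset.sum_le_sum
    intro i hi
    have hi' : i < n - 1 := Finset.mem_range.mp hi
    have hc : a (i + 1) - a i ≤ 0 := by linarith [ha i]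
    have hbi := hb i (by omega)
    calc M * ((a (i + 1) - a i) * ∑ j ∈ range (i + 1), l j)
        = (a (i + 1) - a i) * (M * ∑ j ∈ range (i + 1), l j) := by ring
      _ ≤ (a (i + 1) - a i) * ∑ j ∈ range (i + 1), b j :=
          mul_le_mul_of_nonpos_left hbi hc
  linarith

private lemma le_of_strictMono_nat {n : ℕ} (f : Fin n → ℕ) (hf : StrictMono f) :
    ∀ j : Fin n, (j : ℕ) ≤ f j := by
  have H : ∀ v : ℕ, ∀ j : Fin n, j.val = v → v ≤ f j := by
    intro v
    induction v with
    | zero => intro j _; exact Nat.zero_le _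
    | succ v ih =>
      intro j hj
      have hv : v < n := by omega
      have h1 := ih ⟨v, hv⟩ rfl
      have h2 : f ⟨v, hv⟩ < f j := hf (by simp [Fin.lt_def, hj])
      omega
  intro j; exact H j.val j rfl

private lemma sum_Iic_eq_range {m : ℕ} (f : Fin m → ℝ) (k : Fin m) :
    ∑ i ∈ Finset.Iic k, f i
      = ∑ i ∈ Finset.range (k.val + 1), (fun n => if h : n < m then f ⟨n, h⟩ else 0) i := by
  refine Finset.sum_bij' (fun (a : Fin m) (_ : a ∈ Finset.Iic k) => a.val)
    (fun (n : ℕ) (hn : n ∈ Finset.range (k.val + 1)) =>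
      (⟨n, lt_of_lt_of_le (Finset.mem_range.mp hn) k.isLt⟩ : Fin m)) ?_ ?_ ?_ ?_ ?_
  · intro a ha
    simp only [Finset.mem_range]
    exact Nat.lt_succ_of_le (Fin.le_def.mp (Finset.mem_Iic.mp ha))
  · intro n hn
    simp only [Finset.mem_Iic, Fin.le_def]
    exact Nat.lt_succ_iff.mp (Finset.mem_range.mp hn)
  · intro a ha; rfl
  · intro n hn; rfl
  · intro a ha
    simp [a.isLt]

/-- Sum of an antitone function over any set of cardinality `k+1` is at most
the sum over the first `k+1` indices. -/
private lemma sum_card_le {m : ℕ} (lam : Fin m → ℝ) (hmono : Antitone lam)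
    (T : Finset (Fin m)) (k : Fin m) (hcard : T.card = k.val + 1) :
    ∑ i ∈ T, lam i ≤ ∑ i ∈ Finset.Iic k, lam i := by
  have hk1 : k.val + 1 ≤ m := k.isLt
  set e := T.orderIsoOfFin hcard with he
  have h1 : ∑ i ∈ T, lam i = ∑ j : Fin (k.val + 1), lam (e j) := by
    rw [← Finset.sum_coe_sort T]
    exact (Fintype.sum_equiv e.toEquiv (fun j => lam (e j)) (fun i => lam i)
      (fun j => rfl)).symm
  have h2 : ∑ i ∈ Finset.Iic k, lam i
      = ∑ j : Fin (k.val + 1), lam ⟨j.val, lt_of_lt_of_le j.isLt hk1⟩ := by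
    rw [sum_Iic_eq_range, ← Fin.sum_univ_eq_sum_range
      (fun n => if h : n < m then lam ⟨n, h⟩ else 0) (k.val + 1)]
    refine Finset.sum_congr rfl fun j _ => ?_
    simp [lt_of_lt_of_le j.isLt hk1]
  rw [h1, h2]
  apply Finset.sum_le_sum
  intro j _
  apply hmono
  have hsm : StrictMono (fun j : Fin (k.val + 1) => ((e j : Fin m) : ℕ)) := by
    intro a b hab
    exact Fin.lt_def.mp (Subtype.coe_lt_coe.mpr (e.strictMono hab))
  have := le_of_strictMono_nat _ hsm j
  exact Fin.le_def.mpr this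

/-- The sorted-ℓ1 (SLOPE) norm `J_λ(x) = Σ_i λ_i |x|_(i)`: for `λ` nonincreasing and
nonnegative this equals (by the rearrangement inequality) the maximum over permutations
`σ` of `Σ_i λ_i |x_(σ i)|`. -/
noncomputable def slopeNorm {m : ℕ} (lam : Fin m → ℝ) (x : Fin m → ℝ) : ℝ :=
  ⨆ σ : Equiv.Perm (Fin m), ∑ i, lam i * |x (σ i)|

/-- for `λ_1 ≥ ⋯ ≥ λ_m > 0` and any `w`, the dual norm of the sorted-ℓ1
norm evaluated at `w`, i.e. `sup { Σ_i u_i w_i : J_λ(u) ≤ 1 }`, equals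
`max_{1 ≤ k ≤ m} (Σ_{i=1}^k |w|_(i)) / (Σ_{i=1}^k λ_i)`, where `|w|_(1) ≥ ⋯ ≥ |w|_(m)`
are the absolute values of the entries of `w` sorted in decreasing order. -/
theorem slope_dual_norm_formula {m : ℕ} (hm : 0 < m) (lam : Fin m → ℝ)
    (hmono : Antitone lam) (hpos : ∀ i, 0 < lam i) (w : Fin m → ℝ)
    (σ : Equiv.Perm (Fin m)) (hσ : Antitone (fun i => |w (σ i)|)) :
    sSup {s : ℝ | ∃ u : Fin m → ℝ, slopeNorm lam u ≤ 1 ∧ s = ∑ i, u i * w i}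
      = Finset.univ.sup' (Finset.univ_nonempty_iff.mpr ⟨⟨0, hm⟩⟩)
          (fun k : Fin m =>
            (∑ i ∈ Finset.univ.filter (fun i : Fin m => i ≤ k), |w (σ i)|) /
            (∑ i ∈ Finset.univ.filter (fun i : Fin m => i ≤ k), lam i)) := by
  have hfilter : ∀ k : Fin m, Finset.univ.filter (fun i : Fin m => i ≤ k) = Finset.Iic k := by
    intro k; ext i; simp
  simp only [hfilter]
  set S := {s : ℝ | ∃ u : Fin m → ℝ, slopeNorm lam u ≤ 1 ∧ s = ∑ i, u i * w i} with hS
  have hne : (Finset.univ : Finset (Fin m)).Nonempty := Finset.univ_nonempty_iff.mpr ⟨⟨0, hm⟩⟩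
  set M := Finset.univ.sup' hne
      (fun k : Fin m => (∑ i ∈ Finset.Iic k, |w (σ i)|) / (∑ i ∈ Finset.Iic k, lam i)) with hMdef
  have hLpos : ∀ k : Fin m, 0 < ∑ i ∈ Finset.Iic k, lam i := fun k =>
    Finset.sum_pos (fun i _ => hpos i) ⟨k, Finset.mem_Iic.mpr le_rfl⟩
  have hle_sup : ∀ k : Fin m,
      (∑ i ∈ Finset.Iic k, |w (σ i)|) / (∑ i ∈ Finset.Iic k, lam i) ≤ M := by
    intro k
    have h := Finset.le_sup' (f := fun k : Fin m =>
      (∑ i ∈ Finset.Iic k, |w (σ i)|) / (∑ i ∈ Finset.Iic k, lam i)) (Finset.mem_univ k)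
    rw [← hMdef] at h
    exact h
  have hM0 : 0 ≤ M :=
    le_trans (div_nonneg (Finset.sum_nonneg fun i _ => abs_nonneg _) (hLpos _).le)
      (hle_sup ⟨0, hm⟩)
  have hMk : ∀ k : Fin m, ∑ i ∈ Finset.Iic k, |w (σ i)| ≤ M * ∑ i ∈ Finset.Iic k, lam i := by
    intro k
    exact (div_le_iff₀ (hLpos k)).mp (hle_sup k)
  -- key upper bound
  have key : ∀ s ∈ S, s ≤ M := by
    rintro s ⟨u, hu, rfl⟩
    set τ := Tuple.sort (fun i => -|u (σ i)|) with hτ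
    have hτanti : Antitone (fun i => |u (σ (τ i))|) := by
      have hmt := Tuple.monotone_sort (fun i => -|u (σ i)|)
      intro i j hij
      have h2 := hmt hij
      simpa using h2
    have hmv : Monovary (fun i => |u (σ (τ i))|) (fun i => |w (σ i)|) := hτanti.monovary hσ
    set A : ℕ → ℝ := fun n => if h : n < m then |u (σ (τ ⟨n, h⟩))| else 0 with hA
    set B : ℕ → ℝ := fun n => if h : n < m then |w (σ ⟨n, h⟩)| else 0 with hB
    set L : ℕ → ℝ := fun n => if h : n < m then lam ⟨n, h⟩ else 0 with hL
    have hAmono : ∀ i, A (i + 1) ≤ A i := by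
      intro i
      by_cases h1 : i + 1 < m
      · have h0 : i < m := by omega
        simp only [hA, dif_pos h1, dif_pos h0]
        exact hτanti (by simp [Fin.le_def])
      · by_cases h0 : i < m
        · simp only [hA, dif_neg h1, dif_pos h0]
          exact abs_nonneg _
        · simp [hA, dif_neg h1, dif_neg h0]
    have hA0 : 0 ≤ A (m - 1) := by
      simp only [hA]
      split <;> [exact abs_nonneg _; exact le_rfl]
    have hbk : ∀ k, k < m → ∑ i ∈ range (k + 1), B i ≤ M * ∑ i ∈ range (k + 1), L i := by
      intro k hk
      have h := hMk ⟨k, hk⟩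
      rwa [sum_Iic_eq_range (fun i => |w (σ i)|) ⟨k, hk⟩,
        sum_Iic_eq_range lam ⟨k, hk⟩] at h
    calc ∑ i, u i * w i ≤ ∑ i, |u i| * |w i| :=
          Finset.sum_le_sum fun i _ => (le_abs_self _).trans (le_of_eq (abs_mul _ _))
      _ = ∑ i, |u (σ i)| * |w (σ i)| := (Equiv.sum_comp σ fun i => |u i| * |w i|).symm
      _ ≤ ∑ i, |u (σ (τ i))| * |w (σ i)| := by
          have h := hmv.sum_comp_perm_mul_le_sum_mul (σ := τ⁻¹)
          simpa [Equiv.Perm.inv_def] using h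
      _ = ∑ i ∈ range m, A i * B i := by
          rw [← Fin.sum_univ_eq_sum_range (fun n => A n * B n) m]
          refine Finset.sum_congr rfl fun i _ => ?_
          simp [hA, hB, i.isLt]
      _ ≤ M * ∑ i ∈ range m, A i * L i := abel_le m A B L M hAmono hA0 hbk
      _ = M * ∑ i, lam i * |u (σ (τ i))| := by
          rw [← Fin.sum_univ_eq_sum_range (fun n => A n * L n) m]
          congr 1
          refine Finset.sum_congr rfl fun i _ => ?_
          simp [hA, hL, i.isLt, mul_comm]
      _ ≤ M * slopeNorm lam u := by
          refine mul_le_mul_of_nonneg_left ?_ hM0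
          have h := le_ciSup (f := fun ρ : Equiv.Perm (Fin m) => ∑ i, lam i * |u (ρ i)|)
            (Finite.bddAbove_range _) (τ.trans σ)
          simpa [slopeNorm, Equiv.trans_apply] using h
      _ ≤ M * 1 := mul_le_mul_of_nonneg_left hu hM0
      _ = M := mul_one M
  -- witnesses
  have hwitness : ∀ k : Fin m,
      ((∑ i ∈ Finset.Iic k, |w (σ i)|) / (∑ i ∈ Finset.Iic k, lam i)) ∈ S := by
    intro k
    set Lk := ∑ i ∈ Finset.Iic k, lam i with hLk
    have hLkpos : 0 < Lk := hLpos k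
    refine ⟨fun j => if σ.symm j ≤ k then Real.sign (w j) / Lk else 0, ?_, ?_⟩
    · -- slope norm ≤ 1
      rw [slopeNorm]
      refine ciSup_le fun ρ => ?_
      have step1 : ∑ i, lam i * |if σ.symm (ρ i) ≤ k then Real.sign (w (ρ i)) / Lk else 0|
          ≤ ∑ i, (if σ.symm (ρ i) ≤ k then lam i else 0) / Lk := by
        refine Finset.sum_le_sum fun i _ => ?_
        by_cases h : σ.symm (ρ i) ≤ k
        · simp only [if_pos h]
          rw [abs_div, abs_of_pos hLkpos, div_eq_mul_inv, div_eq_mul_inv, ← mul_assoc]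
          refine mul_le_mul_of_nonneg_right ?_ (inv_nonneg.mpr hLkpos.le)
          calc lam i * |Real.sign (w (ρ i))| ≤ lam i * 1 :=
                mul_le_mul_of_nonneg_left (abs_sign_le_one _) (hpos i).le
            _ = lam i := mul_one _
        · simp [h]
      refine step1.trans ?_
      rw [← Finset.sum_div, ← Finset.sum_filter]
      set T := Finset.univ.filter (fun i : Fin m => σ.symm (ρ i) ≤ k) with hT
      have hTcard : T.card = k.val + 1 := by
        have hTeq : T = (Finset.Iic k).map (ρ.trans σ.symm).symm.toEmbedding := by
          ext i
          simp [hT, Finset.mem_map, Equiv.coe_toEmbedding, Equiv.symm_apply_eq,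
            Equiv.trans_apply]
          exact ⟨fun h => ⟨_, h, σ.apply_symm_apply _⟩, fun ⟨a, ha, he⟩ => by rw [← he, σ.symm_apply_apply]; exact ha⟩
        rw [hTeq, Finset.card_map, Fin.card_Iic]
      have hsum : ∑ i ∈ T, lam i ≤ Lk := by
        rw [hLk]
        exact sum_card_le lam hmono T k hTcard
      calc (∑ i ∈ T, lam i) / Lk ≤ Lk / Lk := by gcongr
        _ = 1 := div_self hLkpos.ne'
    · -- the value
      rw [← Equiv.sum_comp σ
        (fun j => (if σ.symm j ≤ k then Real.sign (w j) / Lk else 0) * w j)]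
      simp only [Equiv.symm_apply_apply]
      have hterm : ∀ i : Fin m,
          (if i ≤ k then Real.sign (w (σ i)) / Lk else 0) * w (σ i)
            = if i ≤ k then |w (σ i)| / Lk else 0 := by
        intro i
        by_cases h : i ≤ k
        · simp only [if_pos h]
          rw [div_mul_eq_mul_div, sign_mul_self_abs]
        · simp [h]
      rw [Finset.sum_congr rfl (fun i _ => hterm i), ← Finset.sum_filter, hfilter k,
        Finset.sum_div]
  exact le_antisymm (csSup_le ⟨_, hwitness ⟨0, hm⟩⟩ key)
    (Finset.sup'_le _ _ fun k _ => le_csSup ⟨M, key⟩ (hwitness k))
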